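/- Let T ⊆ ℕ₀^d be a GNS with corner c and let x be a minimal generator of T (i.e., x ∈ T \ {0} and x is not a sum of two nonzero elements of T). Then T \ {x} has corner c if and only if x ≤ c − 1 coordinatewise. -/
import Mathlib


open scoped BigOperators

/-- A generalized numerical semigroup (GNS): a submonoid of ℕ₀^d with finite complement. -/
def IsGNS {d : ℕ} (S : Set (Fin d → ℕ)) : Prop :=
  0 ∈ S ∧ (∀ x ∈ S, ∀ y ∈ S, x + y ∈ S) ∧ Sᶜ.Finite

/-- `c` is a corner of `S`: (1) any tuple whose i-th coordinate is ≥ c i lies in S;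
(2) for each i with c i ≥ 1 there is a tuple with i-th coordinate c i − 1 outside S. -/
def IsCornerOf {d : ℕ} (S : Set (Fin d → ℕ)) (c : Fin d → ℕ) : Prop :=
  c ∈ S ∧
  (∀ i : Fin d, ∀ x : Fin d → ℕ, c i ≤ x i → x ∈ S) ∧
  (∀ i : Fin d, c i = 0 ∨ ∃ x : Fin d → ℕ, x i + 1 = c i ∧ x ∉ S)

theorem remove_minimal_generator_corner_iff {d : ℕ} (T : Set (Fin d → ℕ)) (hT : IsGNS T)
    (c x : Fin d → ℕ) (hc : IsCornerOf T c) (hx : x ∈ T) (hx0 : x ≠ 0)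
    (hmin : ¬ ∃ a ∈ T, ∃ b ∈ T, a ≠ 0 ∧ b ≠ 0 ∧ x = a + b) :
    IsCornerOf (T \ {x}) c ↔ ∀ i, x i + 1 ≤ c i := by
  obtain ⟨i0, hi0⟩ := Function.ne_iff.mp hx0
  constructor
  · rintro ⟨hcT, h1, h2⟩ i
    by_contra h
    push_neg at h
    exact (h1 i x (by omega)).2 rfl
  · intro h
    refine ⟨⟨hc.1, fun he => ?_⟩, fun i y hy => ⟨hc.2.1 i y hy, fun he => ?_⟩, fun i => ?_⟩
    · have h0 := h i0
      rw [Set.mem_singleton_iff] at he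
      rw [he] at h0
      omega
    · rw [Set.mem_singleton_iff] at he
      have := h i
      rw [← he] at this
      omega
    · rcases hc.2.2 i with h0 | ⟨y, hy1, hy2⟩
      · exact Or.inl h0
      · exact Or.inr ⟨y, hy1, fun hm => hy2 hm.1⟩
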